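/- Let n ≥ 1 and let f₁, …, f_n : ℍ → ℍ each be H-differentiable at z⁰ ∈ ℍ with respective H-derivatives d₁, …, d_n. Then the pointwise product z ↦ f₁(z) · f₂(z) ⋯ f_n(z) is H-differentiable at z⁰ with H-derivative ∑_{i=1}^n f₁(z⁰) ⋯ f_{i−1}(z⁰) · d_i · f_{i+1}(z⁰) ⋯ f_n(z⁰). -/

import Mathlib

open scoped Quaternion
open Filter Topology

/-- A function `f : ℍ → ℍ` is H-differentiable at `z₀` with H-derivative `d` if there exist
sequences of quaternions `A, B` with `∑ ‖A k‖ * ‖B k‖ < ∞` such that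
`f (z₀ + h) - f z₀ = ∑' k, A k * h * B k + ω h` with `‖ω h‖ / ‖h‖ → 0` as `h → 0`,
and `d = ∑' k, A k * B k`. -/
def HDiffAt (f : ℍ[ℝ] → ℍ[ℝ]) (z₀ d : ℍ[ℝ]) : Prop :=
  ∃ A B : ℕ → ℍ[ℝ],
    (Summable fun k => ‖A k‖ * ‖B k‖) ∧
    Filter.Tendsto
      (fun h : ℍ[ℝ] => ‖f (z₀ + h) - f z₀ - ∑' k, A k * h * B k‖ / ‖h‖)
      (𝓝[≠] (0 : ℍ[ℝ])) (𝓝 0) ∧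
    d = ∑' k, A k * B k

noncomputable section HDiffAux
def qi' : ℍ[ℝ] := ⟨0,1,0,0⟩
def qj' : ℍ[ℝ] := ⟨0,0,1,0⟩
def qk' : ℍ[ℝ] := ⟨0,0,0,1⟩
def q4' : ℍ[ℝ] := ⟨(4:ℝ)⁻¹,0,0,0⟩
def uvec : Fin 4 → ℍ[ℝ] := ![1, qi', qj', qk']
def cvec : Fin 4 → ℍ[ℝ] := ![1, -qi', -qj', -qk']
def sg : Fin 4 → ℍ[ℝ] := ![q4', -q4', -q4', -q4']

lemma re_rep (y : ℍ[ℝ]) :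
    ((y.re : ℝ) : ℍ[ℝ]) = q4' * (y - qi'*y*qi' - qj'*y*qj' - qk'*y*qk') := by
  ext <;>
  simp [Quaternion.re_mul, Quaternion.imI_mul, Quaternion.imJ_mul,
    Quaternion.imK_mul] <;> simp [qi', qj', qk', q4'] <;> ring

lemma decomp (x : ℍ[ℝ]) :
    x = ((x.re : ℝ) : ℍ[ℝ]) * 1 + ((((-qi')*x).re : ℝ) : ℍ[ℝ]) * qi'
      + ((((-qj')*x).re : ℝ) : ℍ[ℝ]) * qj' + ((((-qk')*x).re : ℝ) : ℍ[ℝ]) * qk' := by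
  ext <;>
  simp [Quaternion.re_mul, Quaternion.imI_mul, Quaternion.imJ_mul,
    Quaternion.imK_mul] <;> simp [qi', qj', qk'] <;> ring

lemma scalar_mul_rep (y w : ℍ[ℝ]) :
    ((y.re : ℝ) : ℍ[ℝ]) * w = ∑ t : Fin 4, sg t * uvec t * y * (uvec t * w) := by
  rw [re_rep, Fin.sum_univ_four]
  simp only [sg, uvec, Matrix.cons_val_zero, Matrix.cons_val_one, Matrix.head_cons,
    Matrix.cons_val_two, Matrix.tail_cons, Matrix.cons_val_three]
  noncomm_ring

lemma structure_thm (L : ℍ[ℝ] →ₗ[ℝ] ℍ[ℝ]) :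
    ∃ a b : Fin 4 × Fin 4 → ℍ[ℝ], ∀ x, L x = ∑ p : Fin 4 × Fin 4, a p * x * b p := by
  refine ⟨fun p => sg p.2 * uvec p.2 * cvec p.1, fun p => uvec p.2 * L (uvec p.1), fun x => ?_⟩
  have key : L x = ∑ s : Fin 4, ((cvec s * x).re : ℝ) * L (uvec s) := by
    conv_lhs => rw [decomp x]
    rw [Fin.sum_univ_four]
    simp only [cvec, uvec, Matrix.cons_val_zero, Matrix.cons_val_one, Matrix.head_cons,
      Matrix.cons_val_two, Matrix.tail_cons, Matrix.cons_val_three, one_mul,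
      Quaternion.coe_mul_eq_smul, map_add, map_smul]
  rw [key, Fintype.sum_prod_type]
  refine Finset.sum_congr rfl fun s _ => ?_
  rw [scalar_mul_rep]
  exact Finset.sum_congr rfl fun t _ => by noncomm_ring
end HDiffAux

lemma exists_fderiv {f : ℍ[ℝ] → ℍ[ℝ]} {z₀ d : ℍ[ℝ]} (hf : HDiffAt f z₀ d) :
    ∃ L : ℍ[ℝ] →L[ℝ] ℍ[ℝ], HasFDerivAt f L z₀ ∧ L 1 = d := by
  obtain ⟨A, B, sAB, hT, hd⟩ := hf
  have hnorm : ∀ (h : ℍ[ℝ]) k, ‖A k * h * B k‖ = ‖A k‖ * ‖B k‖ * ‖h‖ := by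
    intro h k; rw [norm_mul, norm_mul]; ring
  have snorm : ∀ h : ℍ[ℝ], Summable fun k => ‖A k * h * B k‖ := by
    intro h; simpa [hnorm h] using sAB.mul_right ‖h‖
  have hsum : ∀ h : ℍ[ℝ], Summable fun k => A k * h * B k :=
    fun h => Summable.of_norm (snorm h)
  set L₀ : ℍ[ℝ] →ₗ[ℝ] ℍ[ℝ] :=
    { toFun := fun h => ∑' k, A k * h * B k
      map_add' := fun h h' => by
        simp only [mul_add, add_mul]
        exact Summable.tsum_add (hsum h) (hsum h')
      map_smul' := fun r h => by
        simp only [RingHom.id_apply, mul_smul_comm, smul_mul_assoc]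
        exact Summable.tsum_const_smul r (hsum h) } with hL₀
  set L : ℍ[ℝ] →L[ℝ] ℍ[ℝ] := L₀.mkContinuous (∑' k, ‖A k‖ * ‖B k‖) (by
    intro h
    calc ‖L₀ h‖ ≤ ∑' k, ‖A k * h * B k‖ := norm_tsum_le_tsum_norm (snorm h)
      _ = (∑' k, ‖A k‖ * ‖B k‖) * ‖h‖ := by simp only [hnorm h]; exact tsum_mul_right) with hL
  have Lapp : ∀ h, L h = ∑' k, A k * h * B k := fun h => rfl
  refine ⟨L, ?_, ?_⟩
  · have ext0 : Tendsto (fun h : ℍ[ℝ] => ‖f (z₀ + h) - f z₀ - L h‖ / ‖h‖)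
        (𝓝 (0 : ℍ[ℝ])) (𝓝 0) := by
      rw [← nhdsNE_sup_pure (0 : ℍ[ℝ]), tendsto_sup]
      constructor
      · exact hT
      · have h0 : ‖f (z₀ + 0) - f z₀ - L 0‖ / ‖(0:ℍ[ℝ])‖ = 0 := by simp
        rw [← h0]
        exact tendsto_pure_nhds _ 0
    rw [hasFDerivAt_iff_tendsto]
    have hsub : Tendsto (fun x' : ℍ[ℝ] => x' - z₀) (𝓝 z₀) (𝓝 0) := by
      have h' : Tendsto (fun x' : ℍ[ℝ] => x' - z₀) (𝓝 z₀) (𝓝 (z₀ - z₀)) :=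
        (continuous_id.sub continuous_const).tendsto z₀
      simpa using h'
    refine (ext0.comp hsub).congr fun x' => ?_
    simp [Function.comp, div_eq_inv_mul]
  · rw [Lapp, hd]
    exact tsum_congr fun k => by rw [mul_one]

lemma hDiffAt_of_hasFDerivAt {f : ℍ[ℝ] → ℍ[ℝ]} {z₀ : ℍ[ℝ]} (L : ℍ[ℝ] →L[ℝ] ℍ[ℝ])
    (hf : HasFDerivAt f L z₀) : HDiffAt f z₀ (L 1) := by
  obtain ⟨a, b, hab⟩ := structure_thm (L : ℍ[ℝ] →ₗ[ℝ] ℍ[ℝ])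
  have hab' : ∀ x, L x = ∑ p : Fin 4 × Fin 4, a p * x * b p := hab
  let e : Fin 4 × Fin 4 ≃ Fin 16 := finProdFinEquiv
  set A : ℕ → ℍ[ℝ] := fun k => if h : k < 16 then a (e.symm ⟨k, h⟩) else 0 with hA
  set B : ℕ → ℍ[ℝ] := fun k => if h : k < 16 then b (e.symm ⟨k, h⟩) else 0 with hB
  have hA0 : ∀ k, ¬ k < 16 → A k = 0 := fun k h => by simp [hA, h]
  have tAB : ∀ h : ℍ[ℝ], ∑' k, A k * h * B k = L h := by
    intro h
    rw [tsum_eq_sum (s := Finset.range 16)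
      (fun k hk => by simp [hA0 k (Finset.mem_range.not.1 hk)]),
      ← Fin.sum_univ_eq_sum_range (fun k => A k * h * B k) 16]
    rw [hab' h, ← Equiv.sum_comp e.symm (fun p => a p * h * b p)]
    exact Finset.sum_congr rfl fun i _ => by simp [hA, hB, i.isLt]
  refine ⟨A, B, ?_, ?_, ?_⟩
  · refine summable_of_ne_finset_zero (s := Finset.range 16) fun k hk => ?_
    simp [hA0 k (Finset.mem_range.not.1 hk)]
  · have hadd : Tendsto (fun h : ℍ[ℝ] => z₀ + h) (𝓝[≠] (0:ℍ[ℝ])) (𝓝 z₀) := by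
      refine Tendsto.mono_left ?_ nhdsWithin_le_nhds
      have h' : Tendsto (fun h : ℍ[ℝ] => z₀ + h) (𝓝 0) (𝓝 (z₀ + 0)) :=
        (continuous_const.add continuous_id).tendsto (0:ℍ[ℝ])
      simpa using h'
    refine ((hasFDerivAt_iff_tendsto.1 hf).comp hadd).congr fun h => ?_
    simp only [Function.comp, add_sub_cancel_left, tAB h, div_eq_inv_mul]
  · have : ∑' k, A k * B k = ∑' k, A k * 1 * B k := tsum_congr fun k => by rw [mul_one]
    rw [this, tAB 1]

/-- Product rule for the (ordered) product of `n` H-differentiable functions. -/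
theorem hDiffAt_list_prod (n : ℕ) (hn : 1 ≤ n) (f : Fin n → (ℍ[ℝ] → ℍ[ℝ]))
    (d : Fin n → ℍ[ℝ]) (z₀ : ℍ[ℝ]) (hf : ∀ i, HDiffAt (f i) z₀ (d i)) :
    HDiffAt (fun z => (List.ofFn fun i => f i z).prod) z₀
      (∑ i : Fin n,
        ((List.ofFn fun j => f j z₀).take i).prod * d i *
          ((List.ofFn fun j => f j z₀).drop (i + 1)).prod) := by
  choose L hL hL1 using fun i => exists_fderiv (hf i)
  have hprod := HasFDerivAt.list_prod' (𝕜 := ℝ) (f := fun i x => f i x) (f' := L)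
    (l := List.finRange n) (x := z₀) (fun i _ => hL i)
  have H := hDiffAt_of_hasFDerivAt _ hprod
  simp only [List.ofFn_eq_map]
  convert H using 2
  rw [ContinuousLinearMap.sum_apply]
  refine Fintype.sum_equiv (finCongr (List.length_finRange (n := n)).symm) _ _ fun i => ?_
  have hi : ((List.finRange n)[(Fin.cast (List.length_finRange (n := n)).symm i :
      Fin (List.finRange n).length)] : Fin n) = i := Fin.ext (by simp)
  simp only [Nat.succ_eq_add_one, ContinuousLinearMap.smul_apply, ContinuousLinearMap.smulRight_apply,
    smul_eq_mul, finCongr_apply, Fin.coe_cast, List.map_take, List.map_drop, hL1, mul_assoc, op_smul_eq_mul]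
  rw [hi]
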